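/- Null space characterization of the Abaffian: if in addition a₁, …, a_i are linearly independent, then for each 1 ≤ i ≤ m the null space of H_{i+1}, i.e. {x ∈ ℝⁿ : H_{i+1} x = 0}, equals the linear span of a₁, …, a_i (the range of A_iᵀ where A_i = (a₁, …, a_i)ᵀ). -/
import Mathlib


open Matrix

lemma vecMulVec_mulVec' {n : ℕ} (u v x : Fin n → ℝ) :
    (Matrix.vecMulVec u v).mulVec x = (v ⬝ᵥ x) • u := by
  ext i
  simp [Matrix.mulVec, Matrix.vecMulVec, dotProduct, Finset.mul_sum, mul_assoc,
    mul_comm, mul_left_comm]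

theorem abs_null_space_abaffian
    (m n : ℕ) (hm : 0 < m) (hmn : m ≤ n)
    (a z w p : ℕ → (Fin n → ℝ))
    (H : ℕ → Matrix (Fin n) (Fin n) ℝ)
    (hH1 : IsUnit (H 1))
    (hz : ∀ i, 1 ≤ i → i ≤ m → z i ⬝ᵥ (H i).mulVec (a i) ≠ 0)
    (hw : ∀ i, 1 ≤ i → i ≤ m → w i ⬝ᵥ (H i).mulVec (a i) ≠ 0)
    (hrec : ∀ i, 1 ≤ i → i ≤ m →
      H (i + 1) = H i - (w i ⬝ᵥ (H i).mulVec (a i))⁻¹ •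
        Matrix.vecMulVec ((H i).mulVec (a i)) (Matrix.vecMul (w i) (H i)))
    (hp : ∀ i, 1 ≤ i → i ≤ m → p i = Matrix.mulVec (H i)ᵀ (z i)) :
    ∀ i, 1 ≤ i → i ≤ m →
      LinearIndependent ℝ (fun j : Fin i => a (j.1 + 1)) →
      {x : Fin n → ℝ | (H (i + 1)).mulVec x = 0} =
        ↑(Submodule.span ℝ (Set.range fun j : Fin i => a (j.1 + 1))) := by
  -- we prove the statement for all i ≤ m (including i = 0), without linear independence
  suffices key : ∀ i, i ≤ m →
      {x : Fin n → ℝ | (H (i + 1)).mulVec x = 0} =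
        ↑(Submodule.span ℝ (Set.range fun j : Fin i => a (j.1 + 1))) by
    intro i h1 h2 _
    exact key i h2
  intro i
  induction i with
  | zero =>
    intro _
    have hempty : (Set.range fun j : Fin 0 => a (j.1 + 1)) = ∅ := by
      simp [Set.range_eq_empty]
    rw [hempty, Submodule.span_empty]
    ext x
    simp only [Set.mem_setOf_eq, SetLike.mem_coe, Submodule.mem_bot]
    constructor
    · intro hx
      have : Function.Injective (H 1).mulVec := by
        intro u v huv
        have h := hH1.invertible
        have := congrArg (fun y => (⅟(H 1)).mulVec y) huv
        simpa [Matrix.mulVec_mulVec] using this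
      have : (H 1).mulVec x = (H 1).mulVec 0 := by simpa using hx
      exact ‹Function.Injective (H 1).mulVec› this
    · rintro rfl; simp
  | succ i ih =>
    intro hsm
    have him : i ≤ m := Nat.le_of_succ_le hsm
    have hih := ih him
    have h1si : 1 ≤ i + 1 := Nat.succ_le_succ (Nat.zero_le i)
    set c : ℝ := w (i+1) ⬝ᵥ (H (i+1)).mulVec (a (i+1)) with hc
    have hcne : c ≠ 0 := hw (i+1) h1si hsm
    have hrec' := hrec (i+1) h1si hsm
    -- formula for H (i+2) *ᵥ x
    have hform : ∀ x, (H (i+2)).mulVec x =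
        (H (i+1)).mulVec x -
          (c⁻¹ * (Matrix.vecMul (w (i+1)) (H (i+1)) ⬝ᵥ x)) • (H (i+1)).mulVec (a (i+1)) := by
      intro x
      rw [hrec', Matrix.sub_mulVec, Matrix.smul_mulVec, vecMulVec_mulVec']
      rw [smul_smul]
    have hspan_prev : ∀ y : Fin n → ℝ,
        y ∈ Submodule.span ℝ (Set.range fun j : Fin i => a (j.1 + 1)) →
          (H (i+1)).mulVec y = 0 := by
      intro y hy
      have : y ∈ {x : Fin n → ℝ | (H (i + 1)).mulVec x = 0} := by rw [hih]; exact hy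
      exact this
    ext x
    simp only [Set.mem_setOf_eq, SetLike.mem_coe]
    constructor
    · intro hx
      set t : ℝ := c⁻¹ * (Matrix.vecMul (w (i+1)) (H (i+1)) ⬝ᵥ x) with ht
      have hHx : (H (i+1)).mulVec x = t • (H (i+1)).mulVec (a (i+1)) := by
        have h0 := (hform x).symm.trans hx
        exact sub_eq_zero.mp h0
      have hdiff : (H (i+1)).mulVec (x - t • a (i+1)) = 0 := by
        rw [Matrix.mulVec_sub, Matrix.mulVec_smul, hHx, sub_self]
      have hmem : x - t • a (i+1) ∈
          Submodule.span ℝ (Set.range fun j : Fin i => a (j.1 + 1)) := by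
        have : x - t • a (i+1) ∈ {y : Fin n → ℝ | (H (i + 1)).mulVec y = 0} := hdiff
        rwa [hih] at this
      have hsub : Submodule.span ℝ (Set.range fun j : Fin i => a (j.1 + 1)) ≤
          Submodule.span ℝ (Set.range fun j : Fin (i+1) => a (j.1 + 1)) := by
        apply Submodule.span_mono
        rintro _ ⟨j, rfl⟩
        exact ⟨⟨j.1, Nat.lt_succ_of_lt j.2⟩, rfl⟩
      have ha : a (i+1) ∈ Submodule.span ℝ (Set.range fun j : Fin (i+1) => a (j.1 + 1)) :=
        Submodule.subset_span ⟨⟨i, Nat.lt_succ_self i⟩, rfl⟩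
      have : x = (x - t • a (i+1)) + t • a (i+1) := by abel
      rw [this]
      exact Submodule.add_mem _ (hsub hmem) (Submodule.smul_mem _ t ha)
    · intro hx
      -- show span ⊆ kernel
      have hker : ∀ j : Fin (i+1), (H (i+2)).mulVec (a (j.1 + 1)) = 0 := by
        intro j
        rcases Nat.lt_succ_iff_lt_or_eq.mp j.2 with hj | hj
        · -- j.1 < i : previous vector
          have hprev : (H (i+1)).mulVec (a (j.1 + 1)) = 0 := by
            apply hspan_prev
            exact Submodule.subset_span ⟨⟨j.1, hj⟩, rfl⟩
          rw [hform, hprev]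
          have : Matrix.vecMul (w (i+1)) (H (i+1)) ⬝ᵥ a (j.1 + 1) = 0 := by
            rw [← Matrix.dotProduct_mulVec, hprev, dotProduct_zero]
          rw [this]; simp
        · have hj' : (j.1 : ℕ) + 1 = i + 1 := by rw [hj]
          rw [hj', hform]
          have hdp : Matrix.vecMul (w (i+1)) (H (i+1)) ⬝ᵥ a (i + 1) = c := by
            rw [← Matrix.dotProduct_mulVec]
          rw [hdp, inv_mul_cancel₀ hcne, one_smul, sub_self]
      have : Submodule.span ℝ (Set.range fun j : Fin (i+1) => a (j.1 + 1)) ≤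
          LinearMap.ker (Matrix.mulVecLin (H (i+2))) := by
        rw [Submodule.span_le]
        rintro _ ⟨j, rfl⟩
        simpa using hker j
      simpa using this hx
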